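/- Let K̂ be a cumulative graph narrative on closed intervals of ℕ whose value on every interval of length at least n is a complete graph on at least k vertices, and whose corestriction maps are all monomorphisms. Then for every time t ≥ n, the instantaneous graph K̂([t,t]) has at least k vertices. -/

import Mathlib

open CategoryTheory CategoryTheory.Limits

/-- Closed intervals `[a,b] ⊆ ℕ` (with `a ≤ b`), ordered by inclusion. -/
def NatInt : Type := {p : ℕ × ℕ // p.1 ≤ p.2}

instance : PartialOrder NatInt where
  le I J := J.val.1 ≤ I.val.1 ∧ I.val.2 ≤ J.val.2
  le_refl _ := ⟨le_rfl, le_rfl⟩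
  le_trans _ _ _ h h' := ⟨le_trans h'.1 h.1, le_trans h.2 h'.2⟩
  le_antisymm I J h h' := Subtype.ext (Prod.ext (le_antisymm h'.1 h.1) (le_antisymm h.2 h'.2))

/-- The closed interval `[a,b]`. -/
def NatInt.mk (a b : ℕ) (h : a ≤ b) : NatInt := ⟨(a, b), h⟩

lemma NatInt.mk_le_mk {a b c d : ℕ} {h : a ≤ b} {h' : c ≤ d}
    (h1 : c ≤ a) (h2 : b ≤ d) : NatInt.mk a b h ≤ NatInt.mk c d h' := ⟨h1, h2⟩

variable {D : Type*} [Category D]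

/-- The sheaf condition (persistent narrative) for a presheaf on the poset of
closed intervals of `ℕ`, w.r.t. the Johnstone coverage. -/
def IsPersistentNarr (F : NatIntᵒᵖ ⥤ D) : Prop :=
  ∀ (a p b : ℕ) (hap : a ≤ p) (hpb : p ≤ b),
    IsPullback
      (F.map (homOfLE (NatInt.mk_le_mk (h := hap) (h' := hap.trans hpb) le_rfl hpb)).op)
      (F.map (homOfLE (NatInt.mk_le_mk (h := hpb) (h' := hap.trans hpb) hap le_rfl)).op)
      (F.map (homOfLE (NatInt.mk_le_mk (h := le_rfl) (h' := hap) hap le_rfl)).op)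
      (F.map (homOfLE (NatInt.mk_le_mk (h := le_rfl) (h' := hpb) le_rfl hpb)).op)

/-- The cosheaf condition (cumulative narrative). -/
def IsCumulativeNarr (G : NatInt ⥤ D) : Prop :=
  ∀ (a p b : ℕ) (hap : a ≤ p) (hpb : p ≤ b),
    IsPushout
      (G.map (homOfLE (NatInt.mk_le_mk (h := le_rfl) (h' := hap) hap le_rfl)))
      (G.map (homOfLE (NatInt.mk_le_mk (h := le_rfl) (h' := hpb) le_rfl hpb)))
      (G.map (homOfLE (NatInt.mk_le_mk (h := hap) (h' := hap.trans hpb) le_rfl hpb)))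
      (G.map (homOfLE (NatInt.mk_le_mk (h := hpb) (h' := hap.trans hpb) hap le_rfl)))


universe u

/-- The category of directed multigraphs: `Set`-valued functors on the
two-object schema `{E ⇉ V}` (realized as the walking parallel pair). -/
abbrev Gr : Type (u + 1) := WalkingParallelPair ⥤ Type u

/-- The edges of a directed multigraph. -/
abbrev Gr.Edges (G : Gr.{u}) : Type u := G.obj WalkingParallelPair.zero

/-- The vertices of a directed multigraph. -/
abbrev Gr.Verts (G : Gr.{u}) : Type u := G.obj WalkingParallelPair.one

/-- The source of an edge. -/
def Gr.src (G : Gr.{u}) (e : G.Edges) : G.Verts := G.map WalkingParallelPairHom.left e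

/-- The target of an edge. -/
def Gr.tgt (G : Gr.{u}) (e : G.Edges) : G.Verts := G.map WalkingParallelPairHom.right e

/-- A multigraph is complete if every pair of distinct vertices is joined by
at least one edge. -/
def Gr.IsComplete (G : Gr.{u}) : Prop :=
  ∀ u v : G.Verts, u ≠ v →
    ∃ e : G.Edges, (G.src e = u ∧ G.tgt e = v) ∨ (G.src e = v ∧ G.tgt e = u)

/-- A multigraph has at least `k` vertices. -/
def Gr.AtLeastVerts (k : ℕ) (G : Gr.{u}) : Prop :=
  ∃ f : Fin k → G.Verts, Function.Injective f

section AuxLemmas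

/-- The two legs of a pushout square in `Type` are jointly surjective. -/
lemma pushout_jointly_surjective {W X Y Z : Type} {f : W ⟶ X} {g : W ⟶ Y}
    {h : X ⟶ Z} {i : Y ⟶ Z} (H : IsPushout f g h i) (z : Z) :
    (∃ x, h x = z) ∨ (∃ y, i y = z) := by
  let Z' : Type := {z : Z // (∃ x, h x = z) ∨ (∃ y, i y = z)}
  let h' : X ⟶ Z' := TypeCat.ofHom fun x => ⟨h x, Or.inl ⟨x, rfl⟩⟩
  let i' : Y ⟶ Z' := TypeCat.ofHom fun y => ⟨i y, Or.inr ⟨y, rfl⟩⟩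
  have w : f ≫ h' = g ≫ i' := by ext u; exact types_congr_hom H.w u
  have hid : H.desc h' i' w ≫ TypeCat.ofHom (Subtype.val : Z' → Z) = 𝟙 Z := by
    apply H.hom_ext
    · rw [← Category.assoc, H.inl_desc]; rfl
    · rw [← Category.assoc, H.inr_desc]; rfl
  have hz := (H.desc h' i' w z).2
  have hval : (H.desc h' i' w z).1 = z := types_congr_hom hid z
  rwa [hval] at hz

/-- Componentwise injectivity of a mono in `Gr`. -/
lemma Gr.mono_app_injective {A B : Gr.{0}} (η : A ⟶ B) [Mono η]
    (o : WalkingParallelPair) : Function.Injective (η.app o) := by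
  rw [← CategoryTheory.mono_iff_injective]
  exact (NatTrans.mono_iff_mono_app η).1 inferInstance o

/-- Naturality of `src`/`tgt` for graph morphisms. -/
lemma Gr.nat_src_tgt {A B : Gr.{0}} (η : A ⟶ B) (e : A.Edges) :
    B.src (η.app WalkingParallelPair.zero e) = η.app WalkingParallelPair.one (A.src e) ∧
    B.tgt (η.app WalkingParallelPair.zero e) = η.app WalkingParallelPair.one (A.tgt e) :=
  ⟨(types_congr_hom (η.naturality WalkingParallelPairHom.left) e).symm,
   (types_congr_hom (η.naturality WalkingParallelPairHom.right) e).symm⟩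

/-- If a pushout of graphs is complete and the left span leg is injective on
vertices, then one of the span legs is vertex-surjective. -/
lemma Gr.pushout_key {W X Y Z : Gr.{0}} (f : W ⟶ X) (g : W ⟶ Y) (h : X ⟶ Z) (i : Y ⟶ Z)
    (H : IsPushout f g h i)
    (hf : Function.Injective (f.app WalkingParallelPair.one))
    (hZ : Z.IsComplete) :
    Function.Surjective (f.app WalkingParallelPair.one) ∨
      Function.Surjective (g.app WalkingParallelPair.one) := by
  have Hv : IsPushout (f.app WalkingParallelPair.one) (g.app WalkingParallelPair.one)
      (h.app WalkingParallelPair.one) (i.app WalkingParallelPair.one) :=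
    H.map ((evaluation WalkingParallelPair (Type 0)).obj WalkingParallelPair.one)
  have He : IsPushout (f.app WalkingParallelPair.zero) (g.app WalkingParallelPair.zero)
      (h.app WalkingParallelPair.zero) (i.app WalkingParallelPair.zero) :=
    H.map ((evaluation WalkingParallelPair (Type 0)).obj WalkingParallelPair.zero)
  have key : ∀ (x : X.Verts) (y : Y.Verts),
      h.app WalkingParallelPair.one x = i.app WalkingParallelPair.one y →
      ∃ u : W.Verts, f.app WalkingParallelPair.one u = x ∧
        g.app WalkingParallelPair.one u = y := fun x y hxy =>
    (Types.pushoutCocone_inl_eq_inr_iff_of_isColimit Hv.isColimit hf x y).1 hxy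
  by_cases hfs : Function.Surjective (f.app WalkingParallelPair.one)
  · exact Or.inl hfs
  right
  obtain ⟨x, hx⟩ : ∃ x, ∀ u, f.app WalkingParallelPair.one u ≠ x := by
    simpa [Function.Surjective, not_forall] using hfs
  intro w
  have hne : h.app WalkingParallelPair.one x ≠ i.app WalkingParallelPair.one w := by
    intro e
    obtain ⟨u, hu, -⟩ := key x w e
    exact hx u hu
  obtain ⟨e, he⟩ := hZ _ _ hne
  rcases pushout_jointly_surjective He e with ⟨e', rfl⟩ | ⟨e'', rfl⟩
  · rcases he with ⟨-, h2⟩ | ⟨h1, -⟩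
    · obtain ⟨u, -, hu⟩ := key (X.tgt e') w (by rw [← (Gr.nat_src_tgt h e').2]; exact h2)
      exact ⟨u, hu⟩
    · obtain ⟨u, -, hu⟩ := key (X.src e') w (by rw [← (Gr.nat_src_tgt h e').1]; exact h1)
      exact ⟨u, hu⟩
  · exfalso
    rcases he with ⟨h1, -⟩ | ⟨-, h2⟩
    · obtain ⟨u, hu, -⟩ := key x (Y.src e'') (by rw [← (Gr.nat_src_tgt i e'').1]; exact h1.symm)
      exact hx u hu
    · obtain ⟨u, hu, -⟩ := key x (Y.tgt e'') (by rw [← (Gr.nat_src_tgt i e'').2]; exact h2.symm)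
      exact hx u hu

end AuxLemmas

/-- If a cumulative graph narrative with monic corestriction maps is a
complete graph on at least `k` vertices on every interval of length at least
`n`, then for every time `t ≥ n` the instantaneous snapshot `K̂([t,t])` has
at least `k` vertices. -/
theorem clique_narrative_instantaneous_vertices
    (n k : ℕ) (Khat : NatInt ⥤ Gr.{0})
    (hcu : IsCumulativeNarr Khat)
    (hmono : ∀ (I J : NatInt) (h : I ≤ J), Mono (Khat.map (homOfLE h)))
    (hcomplete : ∀ (a b : ℕ) (h : a ≤ b), a + n ≤ b + 1 →
      (Khat.obj (NatInt.mk a b h)).IsComplete ∧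
      Gr.AtLeastVerts k (Khat.obj (NatInt.mk a b h)))
    (t : ℕ) (ht : n ≤ t) :
    Gr.AtLeastVerts k (Khat.obj (NatInt.mk t t le_rfl)) := by
  by_cases hsmall : t + n ≤ t + 1
  · exact (hcomplete t t le_rfl hsmall).2
  have hn : 1 ≤ n := by omega
  have hat : t + 1 - n ≤ t := by omega
  have htb : t ≤ t + n - 1 := by omega
  have H := hcu (t + 1 - n) t (t + n - 1) hat htb
  have hXv := (hcomplete (t + 1 - n) t hat (by omega)).2
  have hYv := (hcomplete t (t + n - 1) htb (by omega)).2
  have hZc := (hcomplete (t + 1 - n) (t + n - 1) (hat.trans htb) (by omega)).1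
  haveI hfm : Mono (Khat.map (homOfLE (NatInt.mk_le_mk (h := le_rfl) (h' := hat) hat le_rfl))) :=
    hmono _ _ _
  haveI hgm : Mono (Khat.map (homOfLE (NatInt.mk_le_mk (h := le_rfl) (h' := htb) le_rfl htb))) :=
    hmono _ _ _
  have hfinj := Gr.mono_app_injective
    (Khat.map (homOfLE (NatInt.mk_le_mk (h := le_rfl) (h' := hat) hat le_rfl)))
    WalkingParallelPair.one
  have hginj := Gr.mono_app_injective
    (Khat.map (homOfLE (NatInt.mk_le_mk (h := le_rfl) (h' := htb) le_rfl htb)))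
    WalkingParallelPair.one
  rcases Gr.pushout_key _ _ _ _ H hfinj hZc with hs | hs
  · obtain ⟨φ, hφ⟩ := hXv
    exact ⟨fun j => (Equiv.ofBijective _ ⟨hfinj, hs⟩).symm (φ j),
      fun j j' hjj => hφ ((Equiv.ofBijective _ ⟨hfinj, hs⟩).symm.injective hjj)⟩
  · obtain ⟨φ, hφ⟩ := hYv
    exact ⟨fun j => (Equiv.ofBijective _ ⟨hginj, hs⟩).symm (φ j),
      fun j j' hjj => hφ ((Equiv.ofBijective _ ⟨hginj, hs⟩).symm.injective hjj)⟩
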